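/- Fix d ∈ ℕ+, a continuous strictly positive similarity function δ : ℝ^d × ℝ^d → ℝ, and head parameter matrices W_VO, W_K, W_Q ∈ ℝ^{d×d}. Let Q* ∈ ℝ^{d×n*}, K*, V* ∈ ℝ^{d×m*} be fixed matrices and p : {1,…,m*} → (0,1] a probability vector. Let τ : ℕ+ → {1,…,m*} and ρ : ℕ+ → {1,…,n*} be fixed index maps, and suppose for each n, m ∈ ℕ+ there are random matrices Q^(n) ∈ ℝ^{d×n}, K^(m), V^(m) ∈ ℝ^{d×m} such that: for each fixed j, ‖Q_j^(n) − Q*_{ρ(j)}‖ → 0 in probability as n → ∞; for each fixed i, ‖K_i^(m) − K*_{τ(i)}‖ → 0 and ‖V_i^(m) − V*_{τ(i)}‖ → 0 in probability as m → ∞; almost surely K_i^(m) = K_{i'}^(m) and V_i^(m) = V_{i'}^(m) whenever τ(i) = τ(i'); and for each v, (1/m)·|{k ≤ m : τ(k) = v}| → p(v) as m → ∞. Then for each fixed j, the j-th column of the single attention head output, Y_j^{(m,n)} = W_VO V^(m) Sim(W_K K^(m), W_Q Q^(n)) e_j, converges in probability (as m, n → ∞ jointly) to the ρ(j)-th column of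 the reweighted head output W_VO V* Sim^p(W_K K*, W_Q Q*). -/

import Mathlib

open MeasureTheory Filter Finset

noncomputable section

/-- `X` converges to `Y` in probability (w.r.t. the measure `P`) along the filter `l`. -/
def TendstoInProb {Ω : Type*} [MeasurableSpace Ω] (P : Measure Ω)
    {ι : Type*} (l : Filter ι) {E : Type*} [Dist E]
    (X : ι → Ω → E) (Y : Ω → E) : Prop :=
  ∀ ε : ℝ, 0 < ε → Tendsto (fun n => P {ω | ε < dist (X n ω) (Y ω)}) l (nhds 0)

/-- The output column of a single (weighted) attention head: with keys `Kc i`, values `Vc i`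
(`i` ranging over a finite index type) and weights `w i`, the output for query `q` is
`W_VO V Sim^w(W_K K, W_Q q)`, i.e.
`∑ i, (w i δ(W_K K_i, W_Q q) / ∑ k, w k δ(W_K K_k, W_Q q)) • (W_VO V_i)`.
Taking `w ≡ 1` gives the ordinary attention head; taking `w = p` gives the reweighted head. -/
def headOut {d : ℕ} {ι : Type*} [Fintype ι]
    (δ : (Fin d → ℝ) → (Fin d → ℝ) → ℝ)
    (WVO WK WQ : Matrix (Fin d) (Fin d) ℝ)
    (w : ι → ℝ) (Kc Vc : ι → Fin d → ℝ) (q : Fin d → ℝ) : Fin d → ℝ :=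
  ∑ i : ι,
    ((w i * δ (WK.mulVec (Kc i)) (WQ.mulVec q)) /
      ∑ k : ι, w k * δ (WK.mulVec (Kc k)) (WQ.mulVec q)) • (WVO.mulVec (Vc i))

section AuxProb

variable {Ω : Type*} [MeasurableSpace Ω] {P : Measure Ω} {ι : Type*} {l : Filter ι}

lemma tip_comp_filter {E : Type*} [Dist E] {X : ι → Ω → E} {Y : Ω → E}
    (h : TendstoInProb P l X Y) {ι' : Type*} {l' : Filter ι'} {g : ι' → ι}
    (hg : Tendsto g l' l) : TendstoInProb P l' (fun n => X (g n)) Y :=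
  fun ε hε => (h ε hε).comp hg

lemma tip_const {E : Type*} [PseudoMetricSpace E] {a : ι → E} {c : E}
    (h : Tendsto a l (nhds c)) :
    TendstoInProb P l (fun n (_ : Ω) => a n) (fun _ => c) := by
  intro ε hε
  apply Tendsto.congr' _ tendsto_const_nhds
  filter_upwards [Metric.tendsto_nhds.mp h ε hε] with n hn
  have : {ω : Ω | ε < dist (a n) c} = ∅ := by
    ext ω; simp only [Set.mem_setOf_eq, Set.mem_empty_iff_false, iff_false, not_lt]
    exact hn.le
  simp [this]

lemma tip_of_eventuallyEq {E : Type*} [Dist E] {X Y : ι → Ω → E} {c : Ω → E}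
    (h : ∀ᶠ n in l, ∀ᵐ ω ∂P, X n ω = Y n ω)
    (hY : TendstoInProb P l Y c) : TendstoInProb P l X c := by
  intro ε hε
  apply tendsto_of_tendsto_of_tendsto_of_le_of_le' tendsto_const_nhds (hY ε hε)
    (Eventually.of_forall fun n => zero_le)
  filter_upwards [h] with n hn
  refine measure_mono_ae ?_
  filter_upwards [hn] with ω hω
  intro hmem
  have hmem' : ε < dist (X n ω) (c ω) := hmem
  show ε < dist (Y n ω) (c ω)
  rwa [hω] at hmem'

lemma tip_comp_continuousAt {E F : Type*} [PseudoMetricSpace E] [PseudoMetricSpace F]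
    {X : ι → Ω → E} {x0 : E} (hX : TendstoInProb P l X (fun _ => x0))
    {f : E → F} (hf : ContinuousAt f x0) :
    TendstoInProb P l (fun n ω => f (X n ω)) (fun _ => f x0) := by
  intro ε hε
  obtain ⟨δ', hδ', hball⟩ := Metric.continuousAt_iff.mp hf ε hε
  apply tendsto_of_tendsto_of_tendsto_of_le_of_le' tendsto_const_nhds
    (hX (δ' / 2) (half_pos hδ')) (Eventually.of_forall fun n => zero_le)
  apply Eventually.of_forall
  intro n
  refine measure_mono fun ω hω => ?_
  simp only [Set.mem_setOf_eq] at hω ⊢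
  by_contra hcon
  push_neg at hcon
  exact absurd (hball (lt_of_le_of_lt hcon (half_lt_self hδ'))) (not_lt.mpr hω.le)

lemma tip_prod {E F : Type*} [PseudoMetricSpace E] [PseudoMetricSpace F]
    {X : ι → Ω → E} {x0 : E} {Y : ι → Ω → F} {y0 : F}
    (hX : TendstoInProb P l X (fun _ => x0)) (hY : TendstoInProb P l Y (fun _ => y0)) :
    TendstoInProb P l (fun n ω => (X n ω, Y n ω)) (fun _ => (x0, y0)) := by
  intro ε hε
  have hb : ∀ n, P {ω | ε < dist (X n ω, Y n ω) ((x0, y0))} ≤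
      P {ω | ε < dist (X n ω) x0} + P {ω | ε < dist (Y n ω) y0} := by
    intro n
    refine le_trans (measure_mono ?_) (measure_union_le _ _)
    intro ω hω
    simp only [Set.mem_setOf_eq, Prod.dist_eq, lt_max_iff] at hω
    rcases hω with h | h
    · exact Or.inl h
    · exact Or.inr h
  have := Tendsto.add (hX ε hε) (hY ε hε)
  rw [add_zero] at this
  exact tendsto_of_tendsto_of_tendsto_of_le_of_le' tendsto_const_nhds this
    (Eventually.of_forall fun n => zero_le) (Eventually.of_forall hb)

lemma tip_pi {κ : Type*} [Fintype κ] {G : κ → Type*} [∀ k, PseudoMetricSpace (G k)]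
    {X : ι → Ω → ∀ k, G k} {x0 : ∀ k, G k}
    (h : ∀ k, TendstoInProb P l (fun n ω => X n ω k) (fun _ => x0 k)) :
    TendstoInProb P l X (fun _ => x0) := by
  intro ε hε
  have hb : ∀ n, P {ω | ε < dist (X n ω) x0} ≤
      ∑ k, P {ω | ε < dist (X n ω k) (x0 k)} := by
    intro n
    refine le_trans (measure_mono ?_) (measure_iUnion_fintype_le _ _)
    intro ω hω
    simp only [Set.mem_setOf_eq] at hω
    have : ¬ (dist (X n ω) x0 ≤ ε) := not_le.mpr hω
    rw [dist_pi_le_iff hε.le] at this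
    push_neg at this
    obtain ⟨k, hk⟩ := this
    exact Set.mem_iUnion.mpr ⟨k, hk⟩
  have hsum : Tendsto (fun n => ∑ k, P {ω | ε < dist (X n ω k) (x0 k)}) l (nhds 0) := by
    have := tendsto_finset_sum (univ : Finset κ) (fun k _ => h k ε hε)
    simpa using this
  exact tendsto_of_tendsto_of_tendsto_of_le_of_le' tendsto_const_nhds hsum
    (Eventually.of_forall fun n => zero_le) (Eventually.of_forall hb)

end AuxProb

section AuxAlg

lemma sum_group {M : Type*} [AddCommMonoid M] {mstar : ℕ} (τ : ℕ → Fin mstar) (m : ℕ)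
    (F : ℕ → M) (G : Fin mstar → M) (h : ∀ a, a < m → F a = G (τ a)) :
    ∑ a : Fin m, F a.val =
      ∑ v : Fin mstar, (((Finset.range m).filter fun k => τ k = v).card) • G v := by
  rw [Fin.sum_univ_eq_sum_range]
  rw [← Finset.sum_fiberwise (Finset.range m) τ F]
  refine Finset.sum_congr rfl fun v _ => ?_
  rw [← Finset.sum_const]
  refine Finset.sum_congr rfl fun a ha => ?_
  simp only [Finset.mem_filter, Finset.mem_range] at ha
  rw [h a ha.1, ha.2]

lemma headOut_scale {d mstar : ℕ} (δ : (Fin d → ℝ) → (Fin d → ℝ) → ℝ)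
    (WVO WK WQ : Matrix (Fin d) (Fin d) ℝ) (a : ℝ) (ha : a ≠ 0)
    (w : Fin mstar → ℝ) (Kc Vc : Fin mstar → Fin d → ℝ) (q : Fin d → ℝ) :
    headOut δ WVO WK WQ (fun v => a * w v) Kc Vc q = headOut δ WVO WK WQ w Kc Vc q := by
  unfold headOut
  have hden : ∑ k, (a * w k) * δ (WK.mulVec (Kc k)) (WQ.mulVec q) =
      a * ∑ k, w k * δ (WK.mulVec (Kc k)) (WQ.mulVec q) := by
    rw [Finset.mul_sum]; exact Finset.sum_congr rfl fun k _ => by ring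
  rw [hden]
  refine Finset.sum_congr rfl fun i _ => ?_
  rw [mul_assoc, mul_div_mul_left _ _ ha]

lemma headOut_group {d mstar : ℕ} (δ : (Fin d → ℝ) → (Fin d → ℝ) → ℝ)
    (WVO WK WQ : Matrix (Fin d) (Fin d) ℝ) (τ : ℕ → Fin mstar)
    (i : Fin mstar → ℕ) (hi : ∀ v, τ (i v) = v) (m : ℕ) (him : ∀ v, i v < m)
    (Kc Vc : ℕ → Fin d → ℝ)
    (hg : ∀ a a', a < m → a' < m → τ a = τ a' → Kc a = Kc a' ∧ Vc a = Vc a')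
    (q : Fin d → ℝ) :
    headOut δ WVO WK WQ (fun _ : Fin m => (1 : ℝ))
        (fun x : Fin m => Kc x.val) (fun x : Fin m => Vc x.val) q =
      headOut δ WVO WK WQ
        (fun v : Fin mstar => ((((Finset.range m).filter fun k => τ k = v).card : ℝ)))
        (fun v => Kc (i v)) (fun v => Vc (i v)) q := by
  have hrep : ∀ a, a < m → Kc a = Kc (i (τ a)) ∧ Vc a = Vc (i (τ a)) := fun a ha =>
    hg a (i (τ a)) ha (him (τ a)) (hi (τ a)).symm
  unfold headOut
  have hden : ∑ k : Fin m, (1 : ℝ) * δ (WK.mulVec (Kc k.val)) (WQ.mulVec q) =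
      ∑ v : Fin mstar, (((Finset.range m).filter fun k => τ k = v).card : ℝ) *
        δ (WK.mulVec (Kc (i v))) (WQ.mulVec q) := by
    rw [sum_group τ m (fun a => (1 : ℝ) * δ (WK.mulVec (Kc a)) (WQ.mulVec q))
      (fun v => δ (WK.mulVec (Kc (i v))) (WQ.mulVec q))
      (fun a ha => by rw [(hrep a ha).1, one_mul])]
    exact Finset.sum_congr rfl fun v _ => by rw [nsmul_eq_mul]
  rw [hden]
  set D := ∑ v : Fin mstar, (((Finset.range m).filter fun k => τ k = v).card : ℝ) *
      δ (WK.mulVec (Kc (i v))) (WQ.mulVec q) with hD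
  rw [sum_group τ m
    (fun a => ((1 * δ (WK.mulVec (Kc a)) (WQ.mulVec q)) / D) • (WVO.mulVec (Vc a)))
    (fun v => ((δ (WK.mulVec (Kc (i v))) (WQ.mulVec q)) / D) • (WVO.mulVec (Vc (i v))))
    (fun a ha => by rw [(hrep a ha).1, (hrep a ha).2, one_mul])]
  refine Finset.sum_congr rfl fun v _ => ?_
  rw [← Nat.cast_smul_eq_nsmul ℝ, smul_smul, mul_div_assoc]

end AuxAlg

theorem reweighted_attention_head_asymptotic
    {Ω : Type*} [MeasurableSpace Ω] (P : Measure Ω) [IsProbabilityMeasure P]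
    (d nstar mstar : ℕ) (hd : 0 < d) (hnstar : 0 < nstar) (hmstar : 0 < mstar)
    (δ : (Fin d → ℝ) → (Fin d → ℝ) → ℝ)
    (hδ_cont : Continuous fun x : (Fin d → ℝ) × (Fin d → ℝ) => δ x.1 x.2)
    (hδ_pos : ∀ x y, 0 < δ x y)
    (WVO WK WQ : Matrix (Fin d) (Fin d) ℝ)
    (Qstar : Fin nstar → Fin d → ℝ) (Kstar Vstar : Fin mstar → Fin d → ℝ)
    (p : Fin mstar → ℝ) (hp_pos : ∀ v, 0 < p v) (hp_le : ∀ v, p v ≤ 1)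
    (hp_sum : ∑ v, p v = 1)
    (τ : ℕ → Fin mstar) (ρ : ℕ → Fin nstar)
    (Q : ℕ → Ω → ℕ → Fin d → ℝ) (K V : ℕ → Ω → ℕ → Fin d → ℝ)
    (hQ : ∀ j : ℕ,
      TendstoInProb P (atTop : Filter ℕ) (fun n ω => Q n ω j) (fun _ => Qstar (ρ j)))
    (hK : ∀ i : ℕ,
      TendstoInProb P (atTop : Filter ℕ) (fun m ω => K m ω i) (fun _ => Kstar (τ i)))
    (hV : ∀ i : ℕ,
      TendstoInProb P (atTop : Filter ℕ) (fun m ω => V m ω i) (fun _ => Vstar (τ i)))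
    (h_grp : ∀ m : ℕ, ∀ᵐ ω ∂P, ∀ i i' : ℕ, i < m → i' < m → τ i = τ i' →
      K m ω i = K m ω i' ∧ V m ω i = V m ω i')
    (h_card : ∀ v : Fin mstar,
      Tendsto (fun m : ℕ => (((Finset.range m).filter fun k => τ k = v).card : ℝ) / (m : ℝ))
        atTop (nhds (p v))) :
    ∀ j : ℕ,
      TendstoInProb P (atTop : Filter (ℕ × ℕ))
        (fun mn ω =>
          headOut δ WVO WK WQ (fun _ : Fin mn.1 => (1 : ℝ))
            (fun i : Fin mn.1 => K mn.1 ω i.val) (fun i : Fin mn.1 => V mn.1 ω i.val)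
            (Q mn.2 ω j))
        (fun _ => headOut δ WVO WK WQ p Kstar Vstar (Qstar (ρ j))) := by
  intro j
  -- every group index is attained
  have hex : ∀ v : Fin mstar, ∃ k : ℕ, τ k = v := by
    intro v
    by_contra hcon
    push_neg at hcon
    have hzero : ∀ m : ℕ,
        (((Finset.range m).filter fun k => τ k = v).card : ℝ) / (m : ℝ) = 0 := by
      intro m
      have : ((Finset.range m).filter fun k => τ k = v) = ∅ := by
        refine Finset.filter_eq_empty_iff.mpr fun k _ => hcon k
      simp [this]
    have : Tendsto (fun m : ℕ =>
        (((Finset.range m).filter fun k => τ k = v).card : ℝ) / (m : ℝ)) atTop (nhds 0) := by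
      simp only [hzero]; exact tendsto_const_nhds
    exact absurd (tendsto_nhds_unique (h_card v) this) (ne_of_gt (hp_pos v))
  choose i hi using hex
  -- filter projections
  have htfst : Tendsto (Prod.fst : ℕ × ℕ → ℕ) atTop atTop := by
    rw [← prod_atTop_atTop_eq]; exact tendsto_fst
  have htsnd : Tendsto (Prod.snd : ℕ × ℕ → ℕ) atTop atTop := by
    rw [← prod_atTop_atTop_eq]; exact tendsto_snd
  -- normalized group-count weights
  set c : ℕ → Fin mstar → ℝ :=
    fun m v => (((Finset.range m).filter fun k => τ k = v).card : ℝ) / (m : ℝ) with hc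
  -- the joint random vector
  set E := (Fin mstar → ℝ) ×
      ((Fin mstar → Fin d → ℝ) × ((Fin mstar → Fin d → ℝ) × (Fin d → ℝ))) with hE
  set Z : ℕ × ℕ → Ω → E := fun mn ω =>
    (c mn.1, ((fun v => K mn.1 ω (i v)), ((fun v => V mn.1 ω (i v)), Q mn.2 ω j))) with hZdef
  set z0 : E := (p, (Kstar, (Vstar, Qstar (ρ j)))) with hz0
  -- convergence of the joint vector
  have hc_tendsto : Tendsto c atTop (nhds p) := by
    rw [tendsto_pi_nhds]; exact fun v => h_card v
  have hZ : TendstoInProb P (atTop : Filter (ℕ × ℕ)) Z (fun _ => z0) := by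
    refine tip_prod (tip_comp_filter (tip_const hc_tendsto) htfst) ?_
    refine tip_prod ?_ ?_
    · refine tip_pi fun v => ?_
      have := tip_comp_filter (hK (i v)) htfst
      rwa [hi v] at this
    refine tip_prod ?_ ?_
    · refine tip_pi fun v => ?_
      have := tip_comp_filter (hV (i v)) htfst
      rwa [hi v] at this
    · exact tip_comp_filter (hQ j) htsnd
  -- the continuous map
  set f : E → (Fin d → ℝ) :=
    fun z => headOut δ WVO WK WQ z.1 z.2.1 z.2.2.1 z.2.2.2 with hfdef
  set den : E → ℝ :=
    fun z => ∑ v, z.1 v * δ (WK.mulVec (z.2.1 v)) (WQ.mulVec z.2.2.2) with hden_def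
  set S : E → (Fin d → ℝ) :=
    fun z => ∑ v, (z.1 v * δ (WK.mulVec (z.2.1 v)) (WQ.mulVec z.2.2.2)) •
      WVO.mulVec (z.2.2.1 v) with hS_def
  have hfeq : f = fun z => (den z)⁻¹ • S z := by
    funext z
    simp only [hfdef, hS_def, headOut, Finset.smul_sum]
    refine Finset.sum_congr rfl fun v _ => ?_
    rw [div_eq_inv_mul, ← smul_smul]
  have hδcomp : ∀ (A B : E → Fin d → ℝ), Continuous A → Continuous B →
      Continuous fun z => δ (A z) (B z) := by
    intro A B hA hB
    exact hδ_cont.comp (hA.prodMk hB)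
  have hK_cont : ∀ v, Continuous fun z : E => WK.mulVec (z.2.1 v) :=
    fun v => continuous_const.matrix_mulVec ((continuous_apply v).comp
      (continuous_fst.comp continuous_snd))
  have hQ_cont : Continuous fun z : E => WQ.mulVec z.2.2.2 :=
    continuous_const.matrix_mulVec
      (continuous_snd.comp (continuous_snd.comp continuous_snd))
  have hw_cont : ∀ v, Continuous fun z : E => z.1 v :=
    fun v => (continuous_apply v).comp continuous_fst
  have hden_cont : Continuous den := by
    refine continuous_finset_sum _ fun v _ => ?_
    exact (hw_cont v).mul (hδcomp _ _ (hK_cont v) hQ_cont)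
  have hS_cont : Continuous S := by
    refine continuous_finset_sum _ fun v _ => ?_
    refine ((hw_cont v).mul (hδcomp _ _ (hK_cont v) hQ_cont)).smul ?_
    exact continuous_const.matrix_mulVec ((continuous_apply v).comp
      (continuous_fst.comp (continuous_snd.comp continuous_snd)))
  have hne : den z0 ≠ 0 := by
    have : 0 < den z0 := by
      refine Finset.sum_pos (fun v _ => mul_pos (hp_pos v) (hδ_pos _ _)) ?_
      exact Finset.univ_nonempty_iff.mpr ⟨⟨0, hmstar⟩⟩
    exact ne_of_gt this
  have hf : ContinuousAt f z0 := by
    rw [hfeq]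
    exact ((hden_cont.continuousAt.inv₀ hne)).smul hS_cont.continuousAt
  have hfZ : TendstoInProb P (atTop : Filter (ℕ × ℕ))
      (fun mn ω => f (Z mn ω)) (fun _ => f z0) := tip_comp_continuousAt hZ hf
  have hfz0 : f z0 = headOut δ WVO WK WQ p Kstar Vstar (Qstar (ρ j)) := rfl
  rw [← hfz0]
  -- eventual a.e. equality
  refine tip_of_eventuallyEq ?_ hfZ
  set M0 : ℕ := (Finset.univ.sup i) + 1 with hM0
  filter_upwards [htfst.eventually (eventually_ge_atTop M0)] with mn hmn
  filter_upwards [h_grp mn.1] with ω hω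
  have him : ∀ v, i v < mn.1 :=
    fun v => lt_of_lt_of_le (Nat.lt_succ_of_le (Finset.le_sup (Finset.mem_univ v))) hmn
  have hm0 : (mn.1 : ℝ) ≠ 0 := by
    have : 0 < mn.1 := lt_of_lt_of_le (Nat.succ_pos _) hmn
    exact_mod_cast this.ne'
  have hgrp' : ∀ a a', a < mn.1 → a' < mn.1 → τ a = τ a' →
      K mn.1 ω a = K mn.1 ω a' ∧ V mn.1 ω a = V mn.1 ω a' :=
    fun a a' ha ha' ht => hω a a' ha ha' ht
  calc headOut δ WVO WK WQ (fun _ : Fin mn.1 => (1 : ℝ))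
        (fun x : Fin mn.1 => K mn.1 ω x.val) (fun x : Fin mn.1 => V mn.1 ω x.val)
        (Q mn.2 ω j)
      = headOut δ WVO WK WQ
          (fun v : Fin mstar => ((((Finset.range mn.1).filter fun k => τ k = v).card : ℝ)))
          (fun v => K mn.1 ω (i v)) (fun v => V mn.1 ω (i v)) (Q mn.2 ω j) :=
        headOut_group δ WVO WK WQ τ i hi mn.1 him _ _ hgrp' _
    _ = headOut δ WVO WK WQ
          (fun v => (mn.1 : ℝ)⁻¹ *
            ((((Finset.range mn.1).filter fun k => τ k = v).card : ℝ)))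
          (fun v => K mn.1 ω (i v)) (fun v => V mn.1 ω (i v)) (Q mn.2 ω j) :=
        (headOut_scale δ WVO WK WQ _ (inv_ne_zero hm0) _ _ _ _).symm
    _ = f (Z mn ω) := by
        have hcw : (fun v : Fin mstar => (mn.1 : ℝ)⁻¹ *
            ((((Finset.range mn.1).filter fun k => τ k = v).card : ℝ))) = c mn.1 := by
          funext v
          rw [hc]; dsimp only; rw [div_eq_inv_mul]
        rw [hcw]

end
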